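/- For any fixed sequence of payoff vectors u^1, …, u^n with entries in [0,h] and any ε ∈ (0,1), the Perturbed Follow the Leader algorithm satisfies E[FTPL] ≥ (1−ε)·OPT − (h/ε)·(1 + ln k), where OPT = max_a Σ_{i=1}^n u^i_a. -/

import Mathlib

open MeasureTheory
open scoped ENNReal

/-- A fixed tie-breaking rule for maximization over `Fin k`: among the maximizers of `s`,
pick the one with the smallest index. -/
noncomputable def argmaxFin {k : ℕ} (hk : 0 < k) (s : Fin k → ℝ) : Fin k := by
  classical
  exact (Finset.univ.filter fun a => ∀ b, s b ≤ s a).min' (by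
    obtain ⟨a, -, ha⟩ :=
      Finset.exists_max_image (Finset.univ : Finset (Fin k)) s
        ⟨⟨0, hk⟩, Finset.mem_univ _⟩
    exact ⟨a, Finset.mem_filter.mpr ⟨Finset.mem_univ _, fun b => ha b (Finset.mem_univ b)⟩⟩)

section Aux

variable {k : ℕ} (hk : 0 < k)

lemma argmaxFin_spec (s : Fin k → ℝ) : ∀ b, s b ≤ s (argmaxFin hk s) := by
  classical
  have := Finset.min'_mem (Finset.univ.filter fun a => ∀ b, s b ≤ s a) (by
    obtain ⟨a, -, ha⟩ :=
      Finset.exists_max_image (Finset.univ : Finset (Fin k)) s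
        ⟨⟨0, hk⟩, Finset.mem_univ _⟩
    exact ⟨a, Finset.mem_filter.mpr ⟨Finset.mem_univ _, fun b => ha b (Finset.mem_univ b)⟩⟩)
  simpa [argmaxFin] using (Finset.mem_filter.mp this).2

lemma argmaxFin_min (s : Fin k → ℝ) {a : Fin k} (ha : ∀ b, s b ≤ s a) :
    argmaxFin hk s ≤ a :=
  Finset.min'_le _ _ (Finset.mem_filter.mpr ⟨Finset.mem_univ _, ha⟩)

/-- Stability of the argmax under a change that does not decrease the value at the argmax
and does not increase the value elsewhere. -/
lemma argmaxFin_stab {s t : Fin k → ℝ} {a : Fin k}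
    (h1 : ∀ b, b ≠ a → t b ≤ s b) (h2 : s a ≤ t a) (h3 : argmaxFin hk s = a) :
    argmaxFin hk t = a := by
  classical
  have hsmax : ∀ b, s b ≤ s a := h3 ▸ argmaxFin_spec hk s
  have htmax : ∀ b, t b ≤ t a := by
    intro b
    by_cases hb : b = a
    · simp [hb]
    · exact le_trans (h1 b hb) (le_trans (hsmax b) h2)
  have hmem : a ∈ Finset.univ.filter fun c => ∀ b, t b ≤ t c :=
    Finset.mem_filter.mpr ⟨Finset.mem_univ _, htmax⟩
  refine le_antisymm (Finset.min'_le _ _ hmem) (Finset.le_min' _ _ _ ?_)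
  intro b hb
  have hbmax : ∀ c, t c ≤ t b := (Finset.mem_filter.mp hb).2
  by_cases hba : b = a
  · exact le_of_eq hba.symm
  · have e1 : t a ≤ s b := le_trans (hbmax a) (h1 b hba)
    have : ∀ c, s c ≤ s b := fun c => le_trans (hsmax c) (le_trans h2 e1)
    have := argmaxFin_min hk s this
    rwa [h3] at this

lemma filter_lt_succ {n : ℕ} (m : ℕ) (hm : m < n) :
    (Finset.univ.filter fun i : Fin n => i.val < m + 1)
      = insert ⟨m, hm⟩ (Finset.univ.filter fun i : Fin n => i.val < m) := by
  ext i
  simp only [Finset.mem_filter, Finset.mem_insert, Finset.mem_univ, true_and, Fin.ext_iff]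
  omega

/-- The deterministic "be-the-leader" bound. -/
lemma btl {n : ℕ} (u : Fin n → Fin k → ℝ)
    (P : Fin k → ℝ) (hP : ∀ a, 0 ≤ P a) (C : ℝ) (hC : ∀ a, P a ≤ C) (a0 : Fin k) :
    (∑ i, u i a0) - C ≤
    ∑ i : Fin n, u i (argmaxFin hk (fun a =>
      P a + ∑ i' ∈ Finset.univ.filter (fun i' : Fin n => i'.val < i.val + 1), u i' a)) := by
  classical
  set F : ℕ → Fin k → ℝ := fun m a =>
    P a + ∑ i' ∈ Finset.univ.filter (fun i' : Fin n => i'.val < m), u i' a with hF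
  have key : ∀ m, m ≤ n →
      F m (argmaxFin hk (F m)) - C ≤
      ∑ i ∈ Finset.univ.filter (fun i : Fin n => i.val < m),
        u i (argmaxFin hk (F (i.val + 1))) := by
    intro m
    induction m with
    | zero =>
      intro _
      have h0 : (Finset.univ.filter fun i : Fin n => i.val < 0) = ∅ := by
        ext i; simp
      rw [h0, Finset.sum_empty]
      have e : ∀ a, F 0 a = P a := by intro a; simp [hF]
      rw [e]
      linarith [hC (argmaxFin hk (F 0))]
    | succ m ih =>
      intro hm'
      have hm : m < n := hm'
      have hins := filter_lt_succ m hm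
      set im : Fin n := ⟨m, hm⟩
      have hnot : im ∉ Finset.univ.filter (fun i : Fin n => i.val < m) := by
        simp [im]
      rw [hins, Finset.sum_insert hnot]
      have ha' := argmaxFin_spec hk (F m) (argmaxFin hk (F (m + 1)))
      set a' := argmaxFin hk (F (m + 1))
      have hFsucc : F (m + 1) a' = F m a' + u im a' := by
        simp only [hF, hins, Finset.sum_insert hnot]
        ring
      have ihm := ih (le_of_lt hm)
      calc F (m + 1) a' - C = u im a' + (F m a' - C) := by rw [hFsucc]; ring
        _ ≤ u im a' + (F m (argmaxFin hk (F m)) - C) := by linarith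
        _ ≤ _ := add_le_add le_rfl ihm
  have hfin := key n le_rfl
  have huniv : (Finset.univ.filter fun i : Fin n => i.val < n) = Finset.univ := by
    ext i; simp [i.isLt]
  rw [huniv] at hfin
  have h1 : F n a0 ≤ F n (argmaxFin hk (F n)) := argmaxFin_spec hk (F n) a0
  have h2 : (∑ i, u i a0) ≤ F n a0 := by
    simp only [hF, huniv]
    have := hP a0
    linarith
  calc (∑ i, u i a0) - C ≤ F n (argmaxFin hk (F n)) - C := by linarith
    _ ≤ _ := hfin

end Aux

section Shift

variable {k : ℕ} {Ω : Type*} [MeasurableSpace Ω]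

/-- Shifting one geometric coordinate up by one multiplies probabilities by `1 - ε`. -/
lemma shift_measure_le (μ : Measure Ω) [IsProbabilityMeasure μ]
    (ε : ℝ) (hε : 0 < ε) (hε1 : ε < 1)
    (Z : Fin k → Ω → ℕ) (hmeas : ∀ a, Measurable (Z a))
    (hindep : ProbabilityTheory.iIndepFun Z μ)
    (hgeom : ∀ (a : Fin k) (ℓ : ℕ),
      μ {ω | ℓ ≤ Z a ω} = ENNReal.ofReal ((1 - ε) ^ ℓ))
    (a : Fin k) (S T : Set (Fin k → ℕ))
    (hST : ∀ z ∈ S, Function.update z a (z a + 1) ∈ T) :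
    ENNReal.ofReal (1 - ε) * μ ((fun ω b => Z b ω) ⁻¹' S)
      ≤ μ ((fun ω b => Z b ω) ⁻¹' T) := by
  classical
  have h01 : (0:ℝ) ≤ 1 - ε := by linarith
  set ZZ : Ω → (Fin k → ℕ) := fun ω b => Z b ω with hZZ
  -- singleton probabilities of individual coordinates
  set q : Fin k → ℕ → ℝ≥0∞ := fun b t => μ (Z b ⁻¹' {t}) with hqdef
  have hq : ∀ b t, q b t = ENNReal.ofReal (ε * (1 - ε) ^ t) := by
    intro b t
    have hset : Z b ⁻¹' {t} = {ω | t ≤ Z b ω} \ {ω | t + 1 ≤ Z b ω} := by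
      ext ω
      simp only [Set.mem_preimage, Set.mem_singleton_iff, Set.mem_diff, Set.mem_setOf_eq]
      omega
    have hsub : {ω | t + 1 ≤ Z b ω} ⊆ {ω | t ≤ Z b ω} := fun ω hω => by
      simp only [Set.mem_setOf_eq] at *; omega
    have hm1 : MeasurableSet {ω | t + 1 ≤ Z b ω} := hmeas b measurableSet_Ici
    have hfin : μ {ω | t + 1 ≤ Z b ω} ≠ ⊤ := measure_ne_top μ _
    have := measure_diff hsub hm1.nullMeasurableSet hfin
    rw [hqdef]
    simp only
    rw [hset, this, hgeom b t, hgeom b (t+1), ← ENNReal.ofReal_sub _ (by positivity)]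
    congr 1
    ring
  have hqstep : ∀ b t, q b (t + 1) = ENNReal.ofReal (1 - ε) * q b t := by
    intro b t
    rw [hq, hq, ← ENNReal.ofReal_mul h01]
    congr 1
    ring
  -- singleton probabilities of the whole vector
  set p : (Fin k → ℕ) → ℝ≥0∞ := fun z => μ (ZZ ⁻¹' {z}) with hpdef
  have hp : ∀ z, p z = ∏ b, q b (z b) := by
    intro z
    have hset : ZZ ⁻¹' {z} = ⋂ b ∈ Finset.univ, Z b ⁻¹' {z b} := by
      ext ω
      simp [ZZ, funext_iff]
    rw [hpdef]
    simp only
    rw [hset]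
    exact hindep.measure_inter_preimage_eq_mul Finset.univ
      (fun b _ => measurableSet_singleton (z b))
  have hshift : ∀ z, p (Function.update z a (z a + 1)) = ENNReal.ofReal (1 - ε) * p z := by
    intro z
    rw [hp, hp, ← Finset.mul_prod_erase Finset.univ _ (Finset.mem_univ a),
        ← Finset.mul_prod_erase Finset.univ (fun b => q b (z b)) (Finset.mem_univ a)]
    rw [Function.update_self, hqstep a (z a), mul_assoc]
    congr 1
    congr 1
    apply Finset.prod_congr rfl
    intro b hb
    rw [Function.update_of_ne (Finset.ne_of_mem_erase hb)]
  -- measures of events as sums of singleton probabilities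
  have hsum : ∀ (E : Set (Fin k → ℕ)), μ (ZZ ⁻¹' E) = ∑' (z : E), p z := by
    intro E
    have hset : ZZ ⁻¹' E = ⋃ (z : E), ZZ ⁻¹' {(z : Fin k → ℕ)} := by
      ext ω
      simp only [Set.mem_preimage, Set.mem_iUnion, Set.mem_singleton_iff]
      constructor
      · intro hω; exact ⟨⟨ZZ ω, hω⟩, rfl⟩
      · rintro ⟨z, hz⟩; rw [hz]; exact z.2
    have hZZm : Measurable ZZ := measurable_pi_lambda _ hmeas
    rw [hset, measure_iUnion]
    · intro z z' hzz'
      simp only [Function.onFun]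
      apply Set.disjoint_left.mpr
      intro ω hω hω'
      simp only [Set.mem_preimage, Set.mem_singleton_iff] at hω hω'
      exact hzz' (Subtype.ext (hω ▸ hω'))
    · intro z
      exact hZZm (measurableSet_singleton _)
  -- the shift map is injective
  have hinj : Function.Injective (fun z : Fin k → ℕ => Function.update z a (z a + 1)) := by
    intro z z' hzz'
    funext b
    by_cases hb : b = a
    · subst hb
      have := congrFun hzz' b
      simpa using this
    · have := congrFun hzz' b
      simpa [Function.update_of_ne hb] using this
  -- conclude
  rw [hsum S, hsum T, ← ENNReal.tsum_mul_left]
  have : ∀ z : S, ENNReal.ofReal (1 - ε) * p z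
      = (fun w : T => p w) (⟨Function.update (z : Fin k → ℕ) a ((z : Fin k → ℕ) a + 1),
          hST _ z.2⟩ : T) := by
    intro z
    exact (hshift (z : Fin k → ℕ)).symm
  calc ∑' (z : S), ENNReal.ofReal (1 - ε) * p z
      = ∑' (z : S), (fun w : T => p w)
          (⟨Function.update (z : Fin k → ℕ) a ((z : Fin k → ℕ) a + 1), hST _ z.2⟩ : T) := by
        exact tsum_congr this
    _ ≤ ∑' (w : T), p w := by
        apply ENNReal.tsum_comp_le_tsum_of_injective
        intro z z' hzz'
        apply Subtype.ext
        apply hinj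
        exact congrArg Subtype.val hzz'

end Shift

section MaxBound

lemma nat_cast_eq_tsum_ennreal (N : ℕ) :
    (N : ℝ≥0∞) = ∑' ℓ : ℕ, (if ℓ + 1 ≤ N then (1:ℝ≥0∞) else 0) := by
  rw [tsum_eq_sum (s := Finset.range N) (fun ℓ hℓ => by
    rw [if_neg]
    simp only [Finset.mem_range, not_lt] at hℓ
    omega)]
  rw [Finset.sum_congr rfl (fun ℓ hℓ => by
    rw [if_pos]
    simp only [Finset.mem_range] at hℓ
    omega)]
  simp

/-- The real-valued tail sum bound. -/
lemma tail_sum_le (k : ℕ) (hk : 0 < k) (ε : ℝ) (hε : 0 < ε) (hε1 : ε < 1) :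
    ∑' ℓ : ℕ, min 1 ((k:ℝ) * (1 - ε) ^ (ℓ + 1)) ≤ (1 + Real.log k) / ε := by
  have h01 : (0:ℝ) ≤ 1 - ε := by linarith
  have h11 : (1:ℝ) - ε < 1 := by linarith
  have hk1 : (1:ℝ) ≤ (k:ℝ) := by exact_mod_cast hk
  have hlogk : 0 ≤ Real.log k := Real.log_nonneg hk1
  set m : ℕ := ⌈Real.log k / ε⌉₊ with hm
  have hgs : Summable (fun ℓ : ℕ => (k:ℝ) * (1 - ε) ^ (ℓ + 1)) := by
    have := (summable_geometric_of_lt_one h01 h11).mul_left ((k:ℝ) * (1 - ε))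
    apply this.congr
    intro ℓ
    ring
  have hs : Summable (fun ℓ : ℕ => min 1 ((k:ℝ) * (1 - ε) ^ (ℓ + 1))) := by
    apply Summable.of_nonneg_of_le (fun ℓ => le_min zero_le_one (by positivity)) _ hgs
    intro ℓ
    exact min_le_right _ _
  rw [← Summable.sum_add_tsum_nat_add m hs]
  -- head bound
  have hhead : ∑ ℓ ∈ Finset.range m, min 1 ((k:ℝ) * (1 - ε) ^ (ℓ + 1)) ≤ m := by
    calc ∑ ℓ ∈ Finset.range m, min 1 ((k:ℝ) * (1 - ε) ^ (ℓ + 1))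
        ≤ ∑ _ℓ ∈ Finset.range m, (1:ℝ) := Finset.sum_le_sum (fun ℓ _ => min_le_left _ _)
      _ = m := by simp
  -- the key estimate k (1-ε)^m ≤ 1
  have hkm : (k:ℝ) * (1 - ε) ^ m ≤ 1 := by
    have he : (1:ℝ) - ε ≤ Real.exp (-ε) := by
      have := Real.add_one_le_exp (-ε)
      linarith
    have h2 : (1 - ε) ^ m ≤ Real.exp (-ε) ^ m := pow_le_pow_left₀ h01 he m
    have h3 : Real.exp (-ε) ^ m = Real.exp (-(m * ε)) := by
      rw [← Real.exp_nat_mul]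
      ring_nf
    have h4 : Real.log k ≤ m * ε := by
      have := Nat.le_ceil (Real.log k / ε)
      rw [← hm] at this
      rw [div_le_iff₀ hε] at this
      linarith
    have h5 : Real.exp (-(m * ε)) ≤ Real.exp (-Real.log k) :=
      Real.exp_le_exp.mpr (by linarith)
    have h6 : Real.exp (-Real.log k) = (k:ℝ)⁻¹ := by
      rw [Real.exp_neg, Real.exp_log (by positivity)]
    calc (k:ℝ) * (1 - ε) ^ m ≤ (k:ℝ) * (k:ℝ)⁻¹ := by
          apply mul_le_mul_of_nonneg_left _ (by positivity)
          rw [← h6]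
          calc (1 - ε) ^ m ≤ Real.exp (-ε) ^ m := h2
            _ = Real.exp (-(m * ε)) := h3
            _ ≤ _ := h5
      _ = 1 := by field_simp
  -- tail bound
  have htails : Summable (fun ℓ : ℕ => (k:ℝ) * (1 - ε) ^ (m + 1) * (1 - ε) ^ ℓ) :=
    (summable_geometric_of_lt_one h01 h11).mul_left _
  have htail : ∑' ℓ : ℕ, min 1 ((k:ℝ) * (1 - ε) ^ (ℓ + m + 1)) ≤ (1 - ε) / ε := by
    have step1 : ∑' ℓ : ℕ, min 1 ((k:ℝ) * (1 - ε) ^ (ℓ + m + 1))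
        ≤ ∑' ℓ : ℕ, (k:ℝ) * (1 - ε) ^ (m + 1) * (1 - ε) ^ ℓ := by
      apply Summable.tsum_le_tsum _ _ htails
      · intro ℓ
        refine le_trans (min_le_right _ _) (le_of_eq ?_)
        rw [show ℓ + m + 1 = (m + 1) + ℓ by ring, pow_add]
        ring
      · apply Summable.of_nonneg_of_le (fun ℓ => le_min zero_le_one (by positivity)) _ htails
        intro ℓ
        refine le_trans (min_le_right _ _) (le_of_eq ?_)
        rw [show ℓ + m + 1 = (m + 1) + ℓ by ring, pow_add]
        ring
    have step2 : ∑' ℓ : ℕ, (k:ℝ) * (1 - ε) ^ (m + 1) * (1 - ε) ^ ℓ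
        = (k:ℝ) * (1 - ε) ^ (m + 1) * ε⁻¹ := by
      rw [tsum_mul_left, tsum_geometric_of_lt_one h01 h11]
      congr 1
      rw [show (1:ℝ) - (1 - ε) = ε by ring]
    have step3 : (k:ℝ) * (1 - ε) ^ (m + 1) ≤ 1 - ε := by
      have : (k:ℝ) * (1 - ε) ^ (m + 1) = ((k:ℝ) * (1 - ε) ^ m) * (1 - ε) := by
        rw [pow_succ]; ring
      rw [this]
      nlinarith
    calc ∑' ℓ : ℕ, min 1 ((k:ℝ) * (1 - ε) ^ (ℓ + m + 1))
        ≤ (k:ℝ) * (1 - ε) ^ (m + 1) * ε⁻¹ := by rw [← step2]; exact step1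
      _ ≤ (1 - ε) * ε⁻¹ := by
          apply mul_le_mul_of_nonneg_right step3 (by positivity)
      _ = (1 - ε) / ε := by ring
  have hmle : (m:ℝ) ≤ Real.log k / ε + 1 := by
    have := Nat.ceil_lt_add_one (by positivity : (0:ℝ) ≤ Real.log k / ε)
    rw [← hm] at this
    linarith
  have hfinal : (m:ℝ) + (1 - ε) / ε ≤ (1 + Real.log k) / ε := by
    have h1 : (1 + Real.log k) / ε = Real.log k / ε + 1 / ε := by ring
    have h2 : (1 - ε) / ε = 1 / ε - 1 := by field_simp
    linarith
  calc ∑ ℓ ∈ Finset.range m, min 1 ((k:ℝ) * (1 - ε) ^ (ℓ + 1))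
        + ∑' ℓ : ℕ, min 1 ((k:ℝ) * (1 - ε) ^ (ℓ + m + 1)) ≤ (m:ℝ) + (1 - ε) / ε := by
        apply add_le_add hhead htail
    _ ≤ (1 + Real.log k) / ε := hfinal

/-- Bound on the expected maximum of `k` independent geometrics. -/
lemma maxZ_lintegral_le {k : ℕ} (hk : 0 < k) {Ω : Type*} [MeasurableSpace Ω]
    (μ : Measure Ω) [IsProbabilityMeasure μ]
    (ε : ℝ) (hε : 0 < ε) (hε1 : ε < 1)
    (Z : Fin k → Ω → ℕ) (hmeas : ∀ a, Measurable (Z a))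
    (hgeom : ∀ (a : Fin k) (ℓ : ℕ),
      μ {ω | ℓ ≤ Z a ω} = ENNReal.ofReal ((1 - ε) ^ ℓ)) :
    ∫⁻ ω, ((Finset.univ.sup fun b => Z b ω : ℕ) : ℝ≥0∞) ∂μ
      ≤ ENNReal.ofReal ((1 + Real.log k) / ε) := by
  classical
  have h01 : (0:ℝ) ≤ 1 - ε := by linarith
  set Mx : Ω → ℕ := fun ω => Finset.univ.sup fun b => Z b ω with hMx
  have hMxm : Measurable Mx := by
    have hZZm : Measurable (fun ω b => Z b ω) := measurable_pi_lambda _ hmeas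
    have hgm : Measurable (fun z : Fin k → ℕ => Finset.univ.sup z) :=
      measurable_of_countable _
    exact hgm.comp hZZm
  have hsets : ∀ ℓ : ℕ, MeasurableSet {ω | ℓ + 1 ≤ Mx ω} := fun ℓ =>
    hMxm measurableSet_Ici
  -- pointwise decomposition and swap
  have hpt : ∀ ω, ((Mx ω : ℕ) : ℝ≥0∞)
      = ∑' ℓ : ℕ, Set.indicator {ω' | ℓ + 1 ≤ Mx ω'} (fun _ => (1:ℝ≥0∞)) ω := by
    intro ω
    rw [nat_cast_eq_tsum_ennreal (Mx ω)]
    apply tsum_congr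
    intro ℓ
    rw [Set.indicator_apply]
    simp only [Set.mem_setOf_eq]
  rw [show (fun ω => ((Mx ω : ℕ) : ℝ≥0∞))
      = fun ω => ∑' ℓ : ℕ, Set.indicator {ω' | ℓ + 1 ≤ Mx ω'} (fun _ => (1:ℝ≥0∞)) ω from
      funext hpt]
  rw [lintegral_tsum (fun ℓ => ((measurable_const.indicator (hsets ℓ)).aemeasurable))]
  have hind : ∀ ℓ : ℕ, ∫⁻ ω, Set.indicator {ω' | ℓ + 1 ≤ Mx ω'} (fun _ => (1:ℝ≥0∞)) ω ∂μ
      = μ {ω | ℓ + 1 ≤ Mx ω} := by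
    intro ℓ
    rw [← lintegral_indicator_one (hsets ℓ)]
    rfl
  -- union bound
  have hbound : ∀ ℓ : ℕ, μ {ω | ℓ + 1 ≤ Mx ω}
      ≤ ENNReal.ofReal (min 1 ((k:ℝ) * (1 - ε) ^ (ℓ + 1))) := by
    intro ℓ
    rcases le_total ((k:ℝ) * (1 - ε) ^ (ℓ + 1)) 1 with hcase | hcase
    · rw [min_eq_right hcase]
      have hsub : {ω | ℓ + 1 ≤ Mx ω} ⊆ ⋃ b : Fin k, {ω | ℓ + 1 ≤ Z b ω} := by
        intro ω hω
        simp only [Set.mem_setOf_eq, hMx] at hω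
        obtain ⟨b, -, hb⟩ := (Finset.le_sup_iff (by simp : (⊥:ℕ) < ℓ + 1)).mp hω
        exact Set.mem_iUnion.mpr ⟨b, hb⟩
      calc μ {ω | ℓ + 1 ≤ Mx ω} ≤ μ (⋃ b : Fin k, {ω | ℓ + 1 ≤ Z b ω}) := measure_mono hsub
        _ ≤ ∑' b : Fin k, μ {ω | ℓ + 1 ≤ Z b ω} := measure_iUnion_le _
        _ = ∑ b : Fin k, μ {ω | ℓ + 1 ≤ Z b ω} := tsum_fintype _
        _ = ∑ _b : Fin k, ENNReal.ofReal ((1 - ε) ^ (ℓ + 1)) := by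
            apply Finset.sum_congr rfl
            intro b _
            exact hgeom b (ℓ + 1)
        _ = (k : ℝ≥0∞) * ENNReal.ofReal ((1 - ε) ^ (ℓ + 1)) := by
            rw [Finset.sum_const, Finset.card_univ, Fintype.card_fin, nsmul_eq_mul]
        _ = ENNReal.ofReal ((k:ℝ) * (1 - ε) ^ (ℓ + 1)) := by
            rw [ENNReal.ofReal_mul (by positivity), ENNReal.ofReal_natCast]
    · rw [min_eq_left hcase, ENNReal.ofReal_one]
      exact prob_le_one
  calc ∑' ℓ : ℕ, ∫⁻ ω, Set.indicator {ω' | ℓ + 1 ≤ Mx ω'} (fun _ => (1:ℝ≥0∞)) ω ∂μ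
      = ∑' ℓ : ℕ, μ {ω | ℓ + 1 ≤ Mx ω} := tsum_congr hind
    _ ≤ ∑' ℓ : ℕ, ENNReal.ofReal (min 1 ((k:ℝ) * (1 - ε) ^ (ℓ + 1))) :=
        ENNReal.tsum_le_tsum hbound
    _ = ENNReal.ofReal (∑' ℓ : ℕ, min 1 ((k:ℝ) * (1 - ε) ^ (ℓ + 1))) := by
        rw [ENNReal.ofReal_tsum_of_nonneg]
        · intro ℓ; exact le_min zero_le_one (by positivity)
        · apply Summable.of_nonneg_of_le (fun ℓ => le_min zero_le_one (by positivity))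
            (fun ℓ => min_le_right _ _)
          have := (summable_geometric_of_lt_one h01 (by linarith : (1:ℝ) - ε < 1)).mul_left
            ((k:ℝ) * (1 - ε))
          apply this.congr
          intro ℓ
          ring
    _ ≤ ENNReal.ofReal ((1 + Real.log k) / ε) :=
        ENNReal.ofReal_le_ofReal (tail_sum_le k hk ε hε hε1)

end MaxBound

/-- Perturbed Follow the Leader — which in round `i` plays
`argmax_a (u⁰_a + U^{i-1}_a)` with hallucinated payoffs `u⁰_a = h·Z_a`, the `Z_a` being
independent geometric random variables with parameter `ε ∈ (0,1)`
(`P(Z_a ≥ ℓ) = (1-ε)^ℓ`), ties broken by a fixed rule — satisfies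
`E[FTPL] ≥ (1-ε)·OPT - (h/ε)·(1 + ln k)` on every payoff sequence in `[0,h]^k`. -/
theorem ftpl_main_bound
    (k n : ℕ) (hk : 0 < k) (h ε : ℝ) (hh : 0 < h) (hε : 0 < ε) (hε1 : ε < 1)
    (u : Fin n → Fin k → ℝ) (hu : ∀ i a, u i a ∈ Set.Icc (0 : ℝ) h)
    {Ω : Type*} [MeasurableSpace Ω] (μ : Measure Ω) [IsProbabilityMeasure μ]
    (Z : Fin k → Ω → ℕ)
    (hmeas : ∀ a, Measurable (Z a))
    (hindep : ProbabilityTheory.iIndepFun Z μ)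
    (hgeom : ∀ (a : Fin k) (ℓ : ℕ),
      μ {ω | ℓ ≤ Z a ω} = ENNReal.ofReal ((1 - ε) ^ ℓ)) :
    ∫ ω, (∑ i : Fin n,
        u i (argmaxFin hk (fun a =>
          h * (Z a ω : ℝ) +
            ∑ i' ∈ Finset.univ.filter (fun i' : Fin n => i'.val < i.val), u i' a))) ∂μ
      ≥ (1 - ε) *
          (Finset.univ.sup' (Finset.univ_nonempty_iff.mpr ⟨⟨0, hk⟩⟩)
            fun a : Fin k => ∑ i : Fin n, u i a)
        - (h / ε) * (1 + Real.log k) := by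
  classical
  have hu0 : ∀ i a, 0 ≤ u i a := fun i a => (hu i a).1
  have huh : ∀ i a, u i a ≤ h := fun i a => (hu i a).2
  have h01 : (0:ℝ) ≤ 1 - ε := by linarith
  set ZZ : Ω → (Fin k → ℕ) := fun ω b => Z b ω with hZZ
  have hZZm : Measurable ZZ := measurable_pi_lambda _ hmeas
  have hSm : ∀ S : Set (Fin k → ℕ), MeasurableSet (ZZ ⁻¹' S) := fun S =>
    hZZm ((Set.to_countable S).measurableSet)
  set U : ℕ → Fin k → ℝ := fun m b =>
    ∑ i' ∈ Finset.univ.filter (fun i' : Fin n => i'.val < m), u i' b with hU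
  set G : ℕ → (Fin k → ℕ) → Fin k → ℝ := fun m z b => h * z b + U m b with hG
  set A : ℕ → Fin k → Set Ω := fun m a => ZZ ⁻¹' {z | argmaxFin hk (G m z) = a} with hA
  have hUstep : ∀ (i : Fin n) (b : Fin k), U (i.val + 1) b = U i.val b + u i b := by
    intro i b
    rw [hU]
    simp only
    rw [filter_lt_succ i.val i.isLt, Finset.sum_insert (by simp)]
    ring
  -- per-round expectations
  have hAmeas : ∀ m a, MeasurableSet (A m a) := fun m a => hSm _
  have hdecomp : ∀ (m : ℕ) (i : Fin n), (fun ω => u i (argmaxFin hk (G m (ZZ ω))))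
      = fun ω => ∑ a, Set.indicator (A m a) (fun _ => u i a) ω := by
    intro m i
    funext ω
    rw [Finset.sum_congr rfl (fun a _ => Set.indicator_apply (A m a) _ ω)]
    rw [Finset.sum_eq_single (argmaxFin hk (G m (ZZ ω)))]
    · simp [hA]
    · intro a _ ha
      rw [if_neg]
      simp only [hA, Set.mem_preimage, Set.mem_setOf_eq]
      exact fun hc => ha (hc ▸ rfl)
    · intro habs
      exact absurd (Finset.mem_univ _) habs
  have hint : ∀ (m : ℕ) (i : Fin n),
      Integrable (fun ω => u i (argmaxFin hk (G m (ZZ ω)))) μ := by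
    intro m i
    rw [hdecomp m i]
    exact integrable_finset_sum _ (fun a _ => (integrable_const _).indicator (hAmeas m a))
  have hexp : ∀ (m : ℕ) (i : Fin n),
      ∫ ω, u i (argmaxFin hk (G m (ZZ ω))) ∂μ = ∑ a, u i a * (μ (A m a)).toReal := by
    intro m i
    rw [hdecomp m i,
      integral_finset_sum _ (fun a _ => (integrable_const _).indicator (hAmeas m a))]
    apply Finset.sum_congr rfl
    intro a _
    rw [integral_indicator_const (u i a) (hAmeas m a), smul_eq_mul, mul_comm]; rfl
  -- stability
  have hstab : ∀ (i : Fin n) (a : Fin k),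
      ENNReal.ofReal (1 - ε) * μ (A (i.val + 1) a) ≤ μ (A i.val a) := by
    intro i a
    apply shift_measure_le μ ε hε hε1 Z hmeas hindep hgeom a
    intro z hz
    simp only [Set.mem_setOf_eq] at hz ⊢
    apply argmaxFin_stab hk (s := G (i.val + 1) z) (t := G i.val (Function.update z a (z a + 1)))
    · intro b hb
      simp only [hG, Function.update_of_ne hb]
      have := hUstep i b
      have := hu0 i b
      linarith
    · simp only [hG, Function.update_self]
      have := hUstep i a
      have := huh i a
      push_cast
      linarith
    · exact hz
  -- expected maximum
  set Mx : Ω → ℕ := fun ω => Finset.univ.sup fun b => Z b ω with hMx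
  have hMxm : Measurable Mx := by
    have hgm : Measurable (fun z : Fin k → ℕ => Finset.univ.sup z) :=
      measurable_of_countable _
    exact hgm.comp hZZm
  have hlintMx : ∫⁻ ω, ((Mx ω : ℕ) : ℝ≥0∞) ∂μ ≤ ENNReal.ofReal ((1 + Real.log k) / ε) :=
    maxZ_lintegral_le hk μ ε hε hε1 Z hmeas hgeom
  have hMxRm : Measurable (fun ω => (Mx ω : ℝ)) := measurable_from_nat.comp hMxm
  have hMxint : Integrable (fun ω => (Mx ω : ℝ)) μ := by
    refine ⟨hMxRm.aestronglyMeasurable, ?_⟩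
    rw [hasFiniteIntegral_iff_ofReal (Filter.Eventually.of_forall fun ω => by positivity)]
    calc ∫⁻ ω, ENNReal.ofReal ((Mx ω : ℝ)) ∂μ = ∫⁻ ω, ((Mx ω : ℕ) : ℝ≥0∞) ∂μ := by
          apply lintegral_congr
          intro ω
          rw [ENNReal.ofReal_natCast]
      _ ≤ ENNReal.ofReal ((1 + Real.log k) / ε) := hlintMx
      _ < ⊤ := ENNReal.ofReal_lt_top
  have hMxval : ∫ ω, (Mx ω : ℝ) ∂μ ≤ (1 + Real.log k) / ε := by
    have hkR : (1:ℝ) ≤ (k:ℝ) := by exact_mod_cast hk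
    have hnn : (0:ℝ) ≤ (1 + Real.log k) / ε := by
      have := Real.log_nonneg hkR
      positivity
    have heq : ∫ ω, (Mx ω : ℝ) ∂μ = (∫⁻ ω, ((Mx ω : ℕ) : ℝ≥0∞) ∂μ).toReal := by
      rw [integral_eq_lintegral_of_nonneg_ae (Filter.Eventually.of_forall fun ω => by positivity)
        hMxRm.aestronglyMeasurable]
      congr 1
      apply lintegral_congr
      intro ω
      rw [ENNReal.ofReal_natCast]
    rw [heq]
    calc (∫⁻ ω, ((Mx ω : ℕ) : ℝ≥0∞) ∂μ).toReal
        ≤ (ENNReal.ofReal ((1 + Real.log k) / ε)).toReal :=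
          ENNReal.toReal_mono ENNReal.ofReal_ne_top hlintMx
      _ = (1 + Real.log k) / ε := ENNReal.toReal_ofReal hnn
  have hMxnn : 0 ≤ ∫ ω, (Mx ω : ℝ) ∂μ := integral_nonneg fun ω => by positivity
  -- OPT
  set OPT : ℝ := Finset.univ.sup' (Finset.univ_nonempty_iff.mpr ⟨⟨0, hk⟩⟩)
    (fun a : Fin k => ∑ i : Fin n, u i a) with hOPT
  obtain ⟨a0, -, ha0⟩ := Finset.exists_mem_eq_sup'
    (Finset.univ_nonempty_iff.mpr ⟨⟨0, hk⟩⟩) (fun a : Fin k => ∑ i : Fin n, u i a)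
  -- pointwise be-the-leader bound
  have hBTL : ∀ ω, OPT - h * (Mx ω : ℝ)
      ≤ ∑ i : Fin n, u i (argmaxFin hk (G (i.val + 1) (ZZ ω))) := by
    intro ω
    have := btl hk u (fun b => h * ((Z b ω : ℕ) : ℝ))
      (fun b => by positivity) (h * (Mx ω : ℝ))
      (fun b => by
        have : Z b ω ≤ Mx ω := Finset.le_sup (f := fun b => Z b ω) (Finset.mem_univ b)
        have h2 : ((Z b ω : ℕ) : ℝ) ≤ (Mx ω : ℝ) := by exact_mod_cast this
        exact mul_le_mul_of_nonneg_left h2 hh.le)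
      a0
    rw [hOPT, ha0]
    exact this
  -- the two expectations
  set Bf : Ω → ℝ := fun ω => ∑ i : Fin n, u i (argmaxFin hk (G (i.val + 1) (ZZ ω))) with hBf
  have hBfint : Integrable Bf μ := integrable_finset_sum _ (fun i _ => hint (i.val + 1) i)
  have hBval : ∫ ω, Bf ω ∂μ = ∑ i : Fin n, ∑ a, u i a * (μ (A (i.val + 1) a)).toReal := by
    rw [hBf]
    simp only
    rw [integral_finset_sum _ (fun i _ => hint (i.val + 1) i)]
    exact Finset.sum_congr rfl fun i _ => hexp (i.val + 1) i
  have hLHSval : ∫ ω, (∑ i : Fin n, u i (argmaxFin hk (G i.val (ZZ ω)))) ∂μ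
      = ∑ i : Fin n, ∑ a, u i a * (μ (A i.val a)).toReal := by
    rw [integral_finset_sum _ (fun i _ => hint i.val i)]
    exact Finset.sum_congr rfl fun i _ => hexp i.val i
  -- step 1 : B ≥ OPT - h ∫ Mx
  have hstep1 : OPT - h * ∫ ω, (Mx ω : ℝ) ∂μ ≤ ∫ ω, Bf ω ∂μ := by
    have hOPTint : Integrable (fun ω => OPT - h * (Mx ω : ℝ)) μ :=
      (integrable_const OPT).sub (hMxint.const_mul h)
    calc OPT - h * ∫ ω, (Mx ω : ℝ) ∂μ = ∫ ω, (OPT - h * (Mx ω : ℝ)) ∂μ := by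
          rw [integral_sub (integrable_const OPT) (hMxint.const_mul h), integral_const,
            probReal_univ, one_smul, integral_const_mul]
      _ ≤ ∫ ω, Bf ω ∂μ := integral_mono hOPTint hBfint hBTL
  -- step 2 : LHS ≥ (1-ε) B, termwise
  have hstep2 : (1 - ε) * ∫ ω, Bf ω ∂μ
      ≤ ∫ ω, (∑ i : Fin n, u i (argmaxFin hk (G i.val (ZZ ω)))) ∂μ := by
    rw [hBval, hLHSval, Finset.mul_sum]
    apply Finset.sum_le_sum
    intro i _
    rw [Finset.mul_sum]
    apply Finset.sum_le_sum
    intro a _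
    have hmeasle : (1 - ε) * (μ (A (i.val + 1) a)).toReal ≤ (μ (A i.val a)).toReal := by
      have := hstab i a
      have h2 := ENNReal.toReal_mono (measure_ne_top μ _) this
      rw [ENNReal.toReal_mul, ENNReal.toReal_ofReal h01] at h2
      exact h2
    calc (1 - ε) * (u i a * (μ (A (i.val + 1) a)).toReal)
        = u i a * ((1 - ε) * (μ (A (i.val + 1) a)).toReal) := by ring
      _ ≤ u i a * (μ (A i.val a)).toReal :=
          mul_le_mul_of_nonneg_left hmeasle (hu0 i a)
  -- final assembly
  have hgoal : ∫ ω, (∑ i : Fin n, u i (argmaxFin hk (G i.val (ZZ ω)))) ∂μ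
      ≥ (1 - ε) * OPT - (h / ε) * (1 + Real.log k) := by
    have hB := hstep1
    have hIM := hMxval
    have e1 : (1 - ε) * (OPT - h * ∫ ω, (Mx ω : ℝ) ∂μ) ≤ (1 - ε) * ∫ ω, Bf ω ∂μ :=
      mul_le_mul_of_nonneg_left hB h01
    have e2 : (h / ε) * (1 + Real.log k) = h * ((1 + Real.log k) / ε) := by ring
    have e3 : h * ∫ ω, (Mx ω : ℝ) ∂μ ≤ h * ((1 + Real.log k) / ε) :=
      mul_le_mul_of_nonneg_left hIM hh.le
    nlinarith [hstep2, mul_nonneg (mul_nonneg hε.le hh.le) hMxnn]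
  exact hgoal
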